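/- Let G = (V,E) be a connected finite simple graph and B a 1-branch of G with umbrella ordering σ_B = b_1, …, b_{|B|} such that |B^R| ≥ 2k + 1, and let B_f be the set of the 2k + 1 last vertices of B^R according to σ_B. Then for every k-completion F of G there exist a k-completion F' of G with F' ⊆ F and a vertex b ∈ B_f such that, letting l' be the maximal index with b b_{l'} ∈ E and B_b = {b_1, …, b_{l'}}, the graph G + F' admits an umbrella ordering whose first |B_b| vertices are exactly b_1, …, b_{l'} in this order. -/

import Mathlib

open SimpleGraph Finset

variable {V : Type*}

/-- `f` is an (injective, hence linear) umbrella ordering of the graph `G`. -/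
def IsUmbrellaOrdering (G : SimpleGraph V) (f : V → ℕ) : Prop :=
  Function.Injective f ∧
    ∀ u v w : V, f u < f v → f v < f w → G.Adj u w → G.Adj u v ∧ G.Adj v w

/-- A graph is a proper interval graph iff it admits an umbrella ordering. -/
def IsProperIntervalGraph (G : SimpleGraph V) : Prop :=
  ∃ f : V → ℕ, IsUmbrellaOrdering G f

/-- The graph `G + F` obtained by adding the set `F` of pairs as edges. -/
def addEdges (G : SimpleGraph V) (F : Finset (Sym2 V)) : SimpleGraph V :=
  G ⊔ SimpleGraph.fromEdgeSet ↑F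

/-- `F` is a completion of `G`: a set of non-loop non-edges whose addition
makes `G` a proper interval graph. -/
def IsCompletion (G : SimpleGraph V) (F : Finset (Sym2 V)) : Prop :=
  (∀ e ∈ F, ¬ e.IsDiag) ∧ (∀ e ∈ F, e ∉ G.edgeSet) ∧
    IsProperIntervalGraph (addEdges G F)

/-- `F` is a `k`-completion of `G`. -/
def IsKCompletion (G : SimpleGraph V) (k : ℕ) (F : Finset (Sym2 V)) : Prop :=
  IsCompletion G F ∧ F.card ≤ k

/-- `uv` is an extremal edge of `G` with respect to the ordering `f`. -/
def IsExtremalEdge (G : SimpleGraph V) (f : V → ℕ) (u v : V) : Prop :=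
  G.Adj u v ∧ f u < f v ∧
    ∀ u' v' : V, G.Adj u' v' → f u' ≤ f u → f v ≤ f v' → u' = u ∧ v' = v

/-- `c` is the center and `l₁, l₂, l₃` the leaves of an induced claw of `G`. -/
def IsClaw (G : SimpleGraph V) (c l₁ l₂ l₃ : V) : Prop :=
  G.Adj c l₁ ∧ G.Adj c l₂ ∧ G.Adj c l₃ ∧
    ¬ G.Adj l₁ l₂ ∧ ¬ G.Adj l₁ l₃ ∧ ¬ G.Adj l₂ l₃ ∧ l₁ ≠ l₂ ∧ l₁ ≠ l₃ ∧ l₂ ≠ l₃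

/-- `a b c d` is an induced 4-cycle of `G` (in this cyclic order). -/
def IsInducedC4 (G : SimpleGraph V) (a b c d : V) : Prop :=
  G.Adj a b ∧ G.Adj b c ∧ G.Adj c d ∧ G.Adj d a ∧
    ¬ G.Adj a c ∧ ¬ G.Adj b d ∧ a ≠ c ∧ b ≠ d

/-- `x` belongs to some claw of `G` (as center or leaf). -/
def InClaw (G : SimpleGraph V) (x : V) : Prop :=
  ∃ a b c d, IsClaw G a b c d ∧ (x = a ∨ x = b ∨ x = c ∨ x = d)

/-- `x` belongs to some induced 4-cycle of `G`. -/
def InC4 (G : SimpleGraph V) (x : V) : Prop :=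
  ∃ a b c d, IsInducedC4 G a b c d ∧ (x = a ∨ x = b ∨ x = c ∨ x = d)

/-- `{x, y, z}` is an independent set of size 3 (a `3K₁`) of `G`. -/
def IsInd3 (G : SimpleGraph V) (x y z : V) : Prop :=
  x ≠ y ∧ x ≠ z ∧ y ≠ z ∧ ¬ G.Adj x y ∧ ¬ G.Adj x z ∧ ¬ G.Adj y z

/-- `x` belongs to some independent set of size 3 of `G`. -/
def InInd3 (G : SimpleGraph V) (x : V) : Prop := ∃ y z, IsInd3 G x y z

/-- `G` is sunflower-reduced (for the parameter `k`). -/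
def SunflowerReduced (G : SimpleGraph V) (k : ℕ) : Prop :=
  ∀ u v : V, u ≠ v → ¬ G.Adj u v →
    {w : V | ∃ c, IsClaw G c u v w}.ncard ≤ k ∧
    {e : Sym2 V | ∃ a b, e = s(a, b) ∧ IsInducedC4 G u a v b}.ncard ≤ k

/-- `u` and `v` are true twins of `G`: they have the same closed neighborhood. -/
def TrueTwins (G : SimpleGraph V) (u v : V) : Prop :=
  insert u (G.neighborSet u) = insert v (G.neighborSet v)

/-- `b : Fin p → V` enumerates a `K`-join of `G` whose complement is
partitioned into `N`, `L`, `R`, `C`. -/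
structure KJoinWith (G : SimpleGraph V) {p : ℕ} (b : Fin p → V)
    (N L R C : Set V) : Prop where
  inj : Function.Injective b
  clique : ∀ i j : Fin p, i ≠ j → G.Adj (b i) (b j)
  cover : ∀ v : V, v ∉ Set.range b → v ∈ N ∪ L ∪ R ∪ C
  disj : List.Pairwise Disjoint [Set.range b, N, L, R, C]
  nAdj : ∀ v ∈ N, ∀ i, G.Adj v (b i)
  cNotAdj : ∀ v ∈ C, ∀ i, ¬ G.Adj v (b i)
  lrAdj : ∀ v ∈ L ∪ R, ∃ i, G.Adj v (b i)
  lrNotAll : ∀ v ∈ L ∪ R, ∃ i, ¬ G.Adj v (b i)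
  rFirst : ∀ r ∈ R, ∀ i : Fin p, i.val = 0 → ¬ G.Adj r (b i)
  lLast : ∀ x ∈ L, ∀ i : Fin p, i.val = p - 1 → ¬ G.Adj x (b i)
  rMono : ∀ i j : Fin p, i.val + 1 = j.val → ∀ r ∈ R, G.Adj (b i) r → G.Adj (b j) r
  lMono : ∀ i j : Fin p, i.val + 1 = j.val → ∀ x ∈ L, G.Adj (b j) x → G.Adj (b i) x

/-- `B ⊆ V` is a `K`-join of `G`. -/
def IsKJoin (G : SimpleGraph V) (B : Set V) : Prop :=
  ∃ (p : ℕ) (b : Fin p → V) (N L R C : Set V),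
    Set.range b = B ∧ KJoinWith G b N L R C

/-- `B` is a clean `K`-join: none of its vertices belongs to a claw or an
induced 4-cycle of `G`. -/
def IsCleanKJoin (G : SimpleGraph V) (B : Set V) : Prop :=
  IsKJoin G B ∧ ∀ x ∈ B, ¬ InClaw G x ∧ ¬ InC4 G x

/-- `B ⊆ V` is a simple `K`-join of `G` (one of `L`, `R` is empty). -/
def IsSimpleKJoin (G : SimpleGraph V) (B : Set V) : Prop :=
  ∃ (p : ℕ) (b : Fin p → V) (N L R C : Set V),
    Set.range b = B ∧ KJoinWith G b N L R C ∧ (L = ∅ ∨ R = ∅)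

/-- `B` is bcc-clean: none of its vertices belongs to a `3K₁` or an induced
4-cycle of `G`. -/
def IsBccClean (G : SimpleGraph V) (B : Set V) : Prop :=
  ∀ x ∈ B, ¬ InInd3 G x ∧ ¬ InC4 G x

/-- `b : Fin p → V` enumerates (in umbrella order) a 1-branch of `G` with
complement partitioned into `R`, `C`; `b l` is the neighbor of the last
vertex `b (p-1)` of minimal index.  The attachment clique is
`B₁ = {b i : l ≤ i}` and `B^R = {b i : i < l}`. -/
structure OneBranch (G : SimpleGraph V) {p : ℕ} (b : Fin p → V)
    (R C : Set V) (l : Fin p) : Prop where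
  pos : 0 < p
  inj : Function.Injective b
  umbrella : ∀ i j m : Fin p, i < j → j < m → G.Adj (b i) (b m) →
    G.Adj (b i) (b j) ∧ G.Adj (b j) (b m)
  connB : (G.induce (Set.range b)).Connected
  cover : ∀ v : V, v ∉ Set.range b → v ∈ R ∪ C
  disj : List.Pairwise Disjoint [Set.range b, R, C]
  noBC : ∀ v ∈ C, ∀ i, ¬ G.Adj v (b i)
  rNbr : ∀ v ∈ R, ∃ i, G.Adj v (b i)
  lMin : ∀ j : Fin p, j < l → ¬ G.Adj (b j) (b ⟨p - 1, Nat.sub_lt pos Nat.one_pos⟩)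
  lNbr : l.val = p - 1 ∨ G.Adj (b l) (b ⟨p - 1, Nat.sub_lt pos Nat.one_pos⟩)
  noEarlyR : ∀ j : Fin p, j < l → ∀ r ∈ R, ¬ G.Adj r (b j)
  rMono : ∀ i j : Fin p, l ≤ i → i.val + 1 = j.val → ∀ r ∈ R,
    G.Adj (b i) r → G.Adj (b j) r

/-- `b : Fin p → V` enumerates (in umbrella order) a 2-branch of `G` with
complement partitioned into `L`, `R`, `C`; `b l` is the neighbor of `b (p-1)`
of minimal index and `b l'` is the neighbor of `b 0` of maximal index.  The
attachment cliques are `B₁ = {b i : i ≤ l'}` and `B₂ = {b i : l ≤ i}`, and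
`B^R = {b i : l' < i < l}`. -/
structure TwoBranch (G : SimpleGraph V) {p : ℕ} (b : Fin p → V)
    (L R C : Set V) (l l' : Fin p) : Prop where
  pos : 0 < p
  inj : Function.Injective b
  umbrella : ∀ i j m : Fin p, i < j → j < m → G.Adj (b i) (b m) →
    G.Adj (b i) (b j) ∧ G.Adj (b j) (b m)
  connB : (G.induce (Set.range b)).Connected
  cover : ∀ v : V, v ∉ Set.range b → v ∈ L ∪ R ∪ C
  disj : List.Pairwise Disjoint [Set.range b, L, R, C]
  noBC : ∀ v ∈ C, ∀ i, ¬ G.Adj v (b i)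
  lNbrEx : ∀ v ∈ L, ∃ i, G.Adj v (b i)
  rNbrEx : ∀ v ∈ R, ∃ i, G.Adj v (b i)
  lMin : ∀ j : Fin p, j < l → ¬ G.Adj (b j) (b ⟨p - 1, Nat.sub_lt pos Nat.one_pos⟩)
  lNbr : l.val = p - 1 ∨ G.Adj (b l) (b ⟨p - 1, Nat.sub_lt pos Nat.one_pos⟩)
  lMax' : ∀ j : Fin p, l' < j → ¬ G.Adj (b ⟨0, pos⟩) (b j)
  lNbr' : l'.val = 0 ∨ G.Adj (b ⟨0, pos⟩) (b l')
  noEarlyR : ∀ j : Fin p, j < l → ∀ r ∈ R, ¬ G.Adj r (b j)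
  noLateL : ∀ j : Fin p, l' < j → ∀ v ∈ L, ¬ G.Adj v (b j)
  rMono : ∀ i j : Fin p, l ≤ i → i.val + 1 = j.val → ∀ r ∈ R,
    G.Adj (b i) r → G.Adj (b j) r
  lMono : ∀ i j : Fin p, j ≤ l' → i.val + 1 = j.val → ∀ v ∈ L,
    G.Adj (b j) v → G.Adj (b i) v

/-- `e : Fin q → Fin p` lists the last indices of the `q` K-joins of the
K-join decomposition of the 2-branch enumerated by `b` (with attachment
cliques ending at `l'` resp. starting at `l`). -/
def KJoinDecomp (G : SimpleGraph V) {p : ℕ} (b : Fin p → V) (l l' : Fin p)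
    (q : ℕ) (e : Fin q → Fin p) : Prop :=
  0 < q ∧
  (∀ i : Fin q, i.val = 0 → e i = l') ∧
  (∀ i : Fin q, i.val = q - 1 → (e i).val = p - 1) ∧
  StrictMono e ∧
  ∀ i j : Fin q, i.val + 1 = j.val →
    ∃ hs : (e i).val + 1 < p,
      (j.val + 1 < q →
        (⟨(e i).val + 1, hs⟩ : Fin p) < l ∧
        G.Adj (b ⟨(e i).val + 1, hs⟩) (b (e j)) ∧
        ∀ m : Fin p, G.Adj (b ⟨(e i).val + 1, hs⟩) (b m) → m ≤ e j) ∧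
      (j.val + 1 = q → l ≤ (⟨(e i).val + 1, hs⟩ : Fin p))

/-- `G` is a bi-clique chain graph: two cliques joined by a join. -/
def IsBicliqueChain (G : SimpleGraph V) : Prop :=
  ∃ (q : ℕ) (x : Fin q → V) (Y : Set V),
    Function.Injective x ∧
    Disjoint (Set.range x) Y ∧
    (∀ v : V, v ∈ Set.range x ∨ v ∈ Y) ∧
    (∀ i j : Fin q, i ≠ j → G.Adj (x i) (x j)) ∧
    G.IsClique Y ∧
    (∀ i j : Fin q, i ≤ j → ∀ y ∈ Y, G.Adj (x i) y → G.Adj (x j) y)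

/-- `F` is a bcc-`k`-completion of `G`. -/
def IsBccKCompletion (G : SimpleGraph V) (k : ℕ) (F : Finset (Sym2 V)) : Prop :=
  (∀ e ∈ F, ¬ e.IsDiag) ∧ (∀ e ∈ F, e ∉ G.edgeSet) ∧ F.card ≤ k ∧
    IsBicliqueChain (addEdges G F)


private noncomputable def s2f {V : Type*} [DecidableEq V] (e : Sym2 V) : Finset V :=
  Sym2.lift ⟨fun x y => {x, y}, fun x y => by simp [Finset.pair_comm]⟩ e

private lemma mem_s2f {V : Type*} [DecidableEq V] (e : Sym2 V) (a : V) :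
    a ∈ s2f e ↔ a ∈ e := by
  induction e using Sym2.ind with
  | _ x y => simp [s2f, Sym2.lift_mk]

private lemma card_s2f {V : Type*} [DecidableEq V] (e : Sym2 V) : (s2f e).card ≤ 2 := by
  induction e using Sym2.ind with
  | _ x y =>
    simp only [s2f, Sym2.lift_mk]
    exact (Finset.card_insert_le _ _).trans (by simp)

private lemma addEdges_adj' {V : Type*} (G : SimpleGraph V) (F : Finset (Sym2 V)) (u v : V) :
    (addEdges G F).Adj u v ↔ G.Adj u v ∨ (s(u, v) ∈ F ∧ u ≠ v) := by
  simp [addEdges, SimpleGraph.fromEdgeSet_adj]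

private lemma umbrella_reverse {V : Type*} {G : SimpleGraph V} {f : V → ℕ}
    (h : IsUmbrellaOrdering G f) (M : ℕ) (hM : ∀ v, f v ≤ M) :
    IsUmbrellaOrdering G (fun v => M - f v) := by
  constructor
  · intro a c hac
    simp only at hac
    have h1 := hM a; have h2 := hM c
    exact h.1 (by omega)
  · intro u v w huv hvw hadj
    simp only at huv hvw
    have h1 := hM u; have h2 := hM v; have h3 := hM w
    have hwv : f w < f v := by omega
    have hvu : f v < f u := by omega
    obtain ⟨h4, h5⟩ := h.2 w v u hwv hvu hadj.symm
    exact ⟨h5.symm, h4.symm⟩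

/-- For a 1-branch with `|B^R| ≥ 2k + 1`, every `k`-completion `F` can be
shrunk to a `k`-completion `F' ⊆ F` such that, for some vertex `b i` among
the `2k + 1` last vertices of `B^R` and `l₂` the maximal index with
`b i` adjacent to `b l₂`, the graph `G + F'` has an umbrella ordering whose
first vertices are exactly `b 0, …, b l₂` in this order. -/
theorem one_branch_completion [Fintype V] (G : SimpleGraph V)
    (hG : G.Connected) (k p : ℕ) (b : Fin p → V) (R C : Set V) (l : Fin p)
    (hB : OneBranch G b R C l)
    (hsize : 2 * k + 1 ≤ l.val)
    (F : Finset (Sym2 V)) (hF : IsKCompletion G k F) :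
    ∃ F' : Finset (Sym2 V), F' ⊆ F ∧ IsKCompletion G k F' ∧
      ∃ i : Fin p, l.val ≤ i.val + (2 * k + 1) ∧ i < l ∧
        ∃ l₂ : Fin p,
          G.Adj (b i) (b l₂) ∧ (∀ j : Fin p, G.Adj (b i) (b j) → j ≤ l₂) ∧
          ∃ f : V → ℕ, IsUmbrellaOrdering (addEdges G F') f ∧
            (∀ s t : Fin p, s ≤ l₂ → t ≤ l₂ → (s < t ↔ f (b s) < f (b t))) ∧
            (∀ v : V, v ∉ b '' {j : Fin p | j ≤ l₂} →
              ∀ s : Fin p, s ≤ l₂ → f (b s) < f v) := by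
  classical
  obtain ⟨⟨hFdiag, hFedge, hPIG⟩, hFcard⟩ := hF
  obtain ⟨f₀, hUmb₀⟩ := hPIG
  have hlp : l.val < p := l.isLt
  -- Step 1: choose an index i in the window untouched by F
  have hwin : ∃ i : Fin p, (l.val ≤ i.val + (2 * k + 1) ∧ i < l) ∧ ∀ e ∈ F, b i ∉ e := by
    classical
    set win : Finset (Fin p) :=
      univ.filter (fun j => l.val ≤ j.val + (2 * k + 1) ∧ j < l) with hwindef
    set bad : Finset (Fin p) := win.filter (fun j => ∃ e ∈ F, b j ∈ e) with hbaddef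
    have hwcard : 2 * k + 1 ≤ win.card := by
      have hinj := Finset.card_le_card_of_injOn
        (s := Finset.range (2 * k + 1)) (t := win)
        (fun t => (⟨l.val - 1 - t, by omega⟩ : Fin p)) ?_ ?_
      · simpa using hinj
      · intro t ht
        simp only [Finset.mem_coe, Finset.mem_range] at ht
        simp only [Finset.mem_coe, hwindef, Finset.mem_filter, Finset.mem_univ, true_and]
        refine ⟨by show l.val ≤ l.val - 1 - t + (2 * k + 1); omega, ?_⟩
        rw [Fin.lt_def]
        show l.val - 1 - t < l.val
        omega
      · intro t1 h1 t2 h2 heq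
        simp only [Finset.coe_range, Set.mem_Iio] at h1 h2
        have hval : l.val - 1 - t1 = l.val - 1 - t2 := congrArg Fin.val heq
        omega
    have hbcard : bad.card ≤ 2 * k := by
      have h1 : bad.card ≤ (F.biUnion s2f).card := by
        apply Finset.card_le_card_of_injOn b
        · intro j hj
          obtain ⟨-, e, he, hbe⟩ := Finset.mem_filter.1 hj
          exact Finset.mem_biUnion.2 ⟨e, he, (mem_s2f e _).2 hbe⟩
        · intro x _ y _ h
          exact hB.inj h
      have h2 : (F.biUnion s2f).card ≤ 2 * k := by
        calc (F.biUnion s2f).card ≤ ∑ e ∈ F, (s2f e).card := Finset.card_biUnion_le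
          _ ≤ ∑ _e ∈ F, 2 := Finset.sum_le_sum (fun e _ => card_s2f e)
          _ = 2 * F.card := by rw [Finset.sum_const, smul_eq_mul, mul_comm]
          _ ≤ 2 * k := by omega
      omega
    have hex : ∃ j ∈ win, j ∉ bad := by
      by_contra hcon
      push_neg at hcon
      have hsub : win ⊆ bad := fun j hj => hcon j hj
      have := Finset.card_le_card hsub
      omega
    obtain ⟨i, hiw, hib⟩ := hex
    refine ⟨i, ?_, ?_⟩
    · have := Finset.mem_filter.1 hiw
      simpa using this.2
    · intro e he hbe
      exact hib (Finset.mem_filter.2 ⟨hiw, ⟨e, he, hbe⟩⟩)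
  obtain ⟨i, ⟨hi1, hi2⟩, hiF⟩ := hwin
  have hip : i.val < p - 1 := by
    have h2 := hi2
    rw [Fin.lt_def] at h2
    omega
  -- Step 2: connectivity of the branch transferred to index graph
  have hcomap : (SimpleGraph.comap b G).Reachable i ⟨p - 1, by omega⟩ := by
    have h1 := hB.connB.preconnected ⟨b i, ⟨i, rfl⟩⟩
      ⟨b ⟨p - 1, by omega⟩, ⟨⟨p - 1, by omega⟩, rfl⟩⟩
    let φ : G.induce (Set.range b) →g SimpleGraph.comap b G := by
      refine ⟨fun x => Classical.choose x.2, ?_⟩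
      intro x y hxy
      have hx := Classical.choose_spec x.2
      have hy := Classical.choose_spec y.2
      simp only [SimpleGraph.comap_adj]
      rw [hx, hy]
      exact hxy
    have h2 := h1.map φ
    have e1 : φ (⟨b i, ⟨i, rfl⟩⟩ : ↥(Set.range b)) = i :=
      hB.inj (Classical.choose_spec (⟨i, rfl⟩ : b i ∈ Set.range b))
    have e2 : φ (⟨b ⟨p - 1, by omega⟩, ⟨⟨p - 1, by omega⟩, rfl⟩⟩ : ↥(Set.range b)) =
        ⟨p - 1, by omega⟩ :=
      hB.inj (Classical.choose_spec
        (⟨⟨p - 1, by omega⟩, rfl⟩ : b ⟨p - 1, by omega⟩ ∈ Set.range b))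
    rwa [e1, e2] at h2
  have hcross : ∃ m : Fin p, i < m ∧ G.Adj (b i) (b m) := by
    obtain ⟨W⟩ := hcomap
    suffices h : ∀ (x y : Fin p) (_W : (SimpleGraph.comap b G).Walk x y),
        x ≤ i → i < y → ∃ m : Fin p, i < m ∧ G.Adj (b i) (b m) by
      exact h _ _ W le_rfl (by rw [Fin.lt_def]; exact hip)
    intro x y W
    induction W with
    | nil =>
      intro h1 h2
      exact absurd h2 (not_lt.mpr h1)
    | cons hadj W' ih =>
      rename_i x' z y'
      intro h1 h2
      by_cases hz : z ≤ i
      · exact ih hz h2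
      · push_neg at hz
        have hGadj : G.Adj (b x') (b z) := hadj
        rcases eq_or_lt_of_le h1 with heq | hlt
        · exact ⟨z, hz, heq ▸ hGadj⟩
        · exact ⟨z, hz, (hB.umbrella x' i z hlt hz hGadj).2⟩
  -- Step 3: the maximal neighbor l₂ of b i
  have hne : (univ.filter (fun j => G.Adj (b i) (b j))).Nonempty := by
    obtain ⟨m, him, hadj⟩ := hcross
    exact ⟨m, Finset.mem_filter.2 ⟨Finset.mem_univ m, hadj⟩⟩
  set l₂ : Fin p := (univ.filter (fun j => G.Adj (b i) (b j))).max' hne with hl₂def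
  have hl₂adj : G.Adj (b i) (b l₂) := by
    have := Finset.max'_mem (univ.filter (fun j => G.Adj (b i) (b j))) hne
    exact (Finset.mem_filter.1 this).2
  have hl₂max : ∀ j : Fin p, G.Adj (b i) (b j) → j ≤ l₂ := by
    intro j hj
    exact Finset.le_max' _ j (Finset.mem_filter.2 ⟨Finset.mem_univ j, hj⟩)
  have hil₂ : i < l₂ := by
    obtain ⟨m, him, hadj⟩ := hcross
    exact lt_of_lt_of_le him (hl₂max m hadj)
  -- basic prefix facts
  have hInP_b : ∀ j : Fin p, j ≤ l₂ → ∃ j' : Fin p, j' ≤ l₂ ∧ b j' = b j :=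
    fun j hj => ⟨j, hj, rfl⟩
  have hInP_not : ∀ m : Fin p, (¬ ∃ j : Fin p, j ≤ l₂ ∧ b j = b m) → l₂ < m := by
    intro m hm
    by_contra h
    exact hm ⟨m, not_lt.1 h, rfl⟩
  have hNbi : ∀ x : V, G.Adj (b i) x → ∃ j : Fin p, j ≤ l₂ ∧ b j = x := by
    intro x hx
    by_cases hxr : x ∈ Set.range b
    · obtain ⟨j, rfl⟩ := hxr
      exact ⟨j, hl₂max j hx, rfl⟩
    · rcases hB.cover x hxr with hR | hC
      · exact absurd hx.symm (hB.noEarlyR i hi2 x hR)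
      · exact absurd hx.symm (hB.noBC x hC i)
  -- the clique between b i and b l₂
  have hclique : ∀ s t : Fin p, i ≤ s → s < t → t ≤ l₂ → G.Adj (b s) (b t) := by
    intro s t his hst htl
    have hit : i < t := lt_of_le_of_lt his hst
    rcases eq_or_lt_of_le his with heq | his'
    · rw [← heq]
      rcases eq_or_lt_of_le htl with heq2 | htl'
      · rw [heq2]; exact hl₂adj
      · exact (hB.umbrella i t l₂ hit htl' hl₂adj).1
    · rcases eq_or_lt_of_le htl with heq2 | htl'
      · rw [heq2]
        exact (hB.umbrella i s l₂ his' (lt_of_lt_of_le hst htl) hl₂adj).2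
      · have h1 : G.Adj (b i) (b t) :=
          (hB.umbrella i t l₂ (lt_trans his' hst) htl' hl₂adj).1
        exact (hB.umbrella i s t his' hst h1).2
  -- attachment facts
  have hF3i : ∀ (s : Fin p) (v : V), s ≤ l₂ → (¬ ∃ j : Fin p, j ≤ l₂ ∧ b j = v) →
      G.Adj (b s) v → i < s := by
    intro s v hs hv hadj
    by_contra hcon
    push_neg at hcon
    rcases eq_or_lt_of_le hcon with heq | hsi
    · exact hv (hNbi v (heq ▸ hadj))
    · by_cases hvr : v ∈ Set.range b
      · obtain ⟨m, rfl⟩ := hvr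
        have hm : l₂ < m := hInP_not m hv
        have him : i < m := lt_trans hil₂ hm
        have := (hB.umbrella s i m hsi him hadj).2
        exact absurd (hl₂max m this) (not_le.mpr hm)
      · rcases hB.cover v hvr with hR | hC
        · exact hB.noEarlyR s (lt_of_le_of_lt hcon hi2) v hR hadj.symm
        · exact hB.noBC v hC s hadj.symm
  have hF3ii : ∀ (s t : Fin p) (v : V), (¬ ∃ j : Fin p, j ≤ l₂ ∧ b j = v) →
      G.Adj (b s) v → s ≤ t → t ≤ l₂ → G.Adj (b t) v := by
    intro s t v hv hadj hst htl
    by_cases hvr : v ∈ Set.range b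
    · obtain ⟨m, rfl⟩ := hvr
      have hm : l₂ < m := hInP_not m hv
      rcases eq_or_lt_of_le hst with heq | hst'
      · exact heq ▸ hadj
      · exact (hB.umbrella s t m hst' (lt_of_le_of_lt htl hm) hadj).2
    · rcases hB.cover v hvr with hR | hC
      · have hls : l ≤ s := by
          by_contra h
          push_neg at h
          exact hB.noEarlyR s h v hR hadj.symm
        have key : ∀ n : ℕ, (hsn : s.val ≤ n) → (hn : n < p) → n ≤ l₂.val →
            G.Adj (b ⟨n, hn⟩) v := by
          intro n hsn
          induction n, hsn using Nat.le_induction with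
          | base =>
            intro hn _
            rw [Fin.eta]
            exact hadj
          | succ n hsn ih =>
            intro hn hnl
            have hn' : n < p := by omega
            have hprev : G.Adj (b ⟨n, hn'⟩) v := ih hn' (by omega)
            refine hB.rMono ⟨n, hn'⟩ ⟨n + 1, hn⟩ ?_ rfl v hR hprev
            rw [Fin.le_def]
            have := Fin.le_def.1 hls
            simp only
            omega
        have := key t.val (Fin.le_def.1 hst) t.isLt (Fin.le_def.1 htl)
        rwa [Fin.eta] at this
      · exact absurd hadj.symm (hB.noBC v hC s)
  -- edges of G + F at b i are G-edges
  have hUT : ∀ x : V, (addEdges G F).Adj (b i) x → G.Adj (b i) x := by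
    intro x hx
    rw [addEdges_adj'] at hx
    rcases hx with h | ⟨hmem, hne'⟩
    · exact h
    · exact absurd (Sym2.mem_mk_left _ _) (hiF _ hmem)
  -- Step 4: orient the umbrella ordering of G + F
  have hbil₂ : b i ≠ b l₂ := fun h => absurd (hB.inj h) (ne_of_lt hil₂)
  obtain ⟨f, hUmbf, hflip⟩ :
      ∃ f : V → ℕ, IsUmbrellaOrdering (addEdges G F) f ∧ f (b i) < f (b l₂) := by
    rcases lt_or_gt_of_ne (fun h => hbil₂ (hUmb₀.1 h)) with h | h
    · exact ⟨f₀, hUmb₀, h⟩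
    · refine ⟨fun v => Finset.univ.sup f₀ - f₀ v,
        umbrella_reverse hUmb₀ _ (fun v => Finset.le_sup (Finset.mem_univ v)), ?_⟩
      have h1 : f₀ (b i) ≤ Finset.univ.sup f₀ := Finset.le_sup (Finset.mem_univ _)
      have h2 : f₀ (b l₂) ≤ Finset.univ.sup f₀ := Finset.le_sup (Finset.mem_univ _)
      simp only
      omega
  -- Step 5: all vertices outside the prefix come after the clique in f
  have hH4a : ∀ v : V, (¬ ∃ j : Fin p, j ≤ l₂ ∧ b j = v) → f (b i) < f v := by
    intro v hv
    by_contra hle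
    push_neg at hle
    have hvne : v ≠ b i := fun h => hv ⟨i, hil₂.le, h.symm⟩
    have hflt : f v < f (b i) := lt_of_le_of_ne hle (fun h => hvne (hUmbf.1 h))
    have hwalk : ∀ (u w : V) (_W : G.Walk u w), w = b l₂ →
        (¬ ∃ j : Fin p, j ≤ l₂ ∧ b j = u) → f u < f (b i) → False := by
      intro u w W
      induction W with
      | nil =>
        intro hw hu _
        exact hu ⟨l₂, le_rfl, hw.symm⟩
      | cons hadj W' ih =>
        rename_i u' z' y'
        intro hw hu huf
        have hHuy : (addEdges G F).Adj u' z' := by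
          rw [addEdges_adj']
          exact Or.inl hadj
        rcases lt_trichotomy (f z') (f (b i)) with h1 | h1 | h1
        · by_cases hyP : ∃ j : Fin p, j ≤ l₂ ∧ b j = z'
          · obtain ⟨c, hc, rfl⟩ := hyP
            have hic : i < c := hF3i c u' hc hu hadj.symm
            have hGl₂u : G.Adj (b l₂) u' := hF3ii c l₂ u' hu hadj.symm hc le_rfl
            have hHul₂ : (addEdges G F).Adj u' (b l₂) := by
              rw [addEdges_adj']
              exact Or.inl hGl₂u.symm
            have := (hUmbf.2 u' (b i) (b l₂) huf hflip hHul₂).1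
            exact hu (hNbi u' (hUT u' this.symm))
          · exact ih hw hyP h1
        · have hzi : z' = b i := hUmbf.1 h1
          rw [hzi] at hadj
          exact hu (hNbi u' hadj.symm)
        · have := (hUmbf.2 u' (b i) z' huf h1 hHuy).1
          exact hu (hNbi u' (hUT u' this.symm))
    obtain ⟨W⟩ := hG.preconnected v (b l₂)
    exact hwalk v _ W rfl hv hflt
  have hH4b : ∀ (v : V) (s : Fin p), (¬ ∃ j : Fin p, j ≤ l₂ ∧ b j = v) →
      i ≤ s → s ≤ l₂ → f (b s) < f v := by
    intro v s hv his hsl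
    rcases eq_or_lt_of_le his with heq | his'
    · exact heq ▸ hH4a v hv
    · by_contra hle
      push_neg at hle
      have hvne : v ≠ b s := fun h => hv ⟨s, hsl, h.symm⟩
      have hlt : f v < f (b s) := lt_of_le_of_ne hle (fun h => hvne (hUmbf.1 h))
      have hHis : (addEdges G F).Adj (b i) (b s) := by
        rw [addEdges_adj']
        exact Or.inl (hclique i s le_rfl his' hsl)
      have := (hUmbf.2 (b i) v (b s) (hH4a v hv) hlt hHis).1
      exact hv (hNbi v (hUT v this))
  -- Step 6: the reduced completion F'
  set F' : Finset (Sym2 V) := F.filter (fun e =>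
    (∀ x ∈ e, ¬ ∃ j : Fin p, j ≤ l₂ ∧ b j = x) ∨
    ∃ (s : Fin p) (x : V), e = s(b s, x) ∧ i < s ∧ s ≤ l₂ ∧
      (¬ ∃ j : Fin p, j ≤ l₂ ∧ b j = x) ∧
      ∀ t : Fin p, s ≤ t → t ≤ l₂ → (addEdges G F).Adj (b t) x) with hF'def
  have hF'sub : F' ⊆ F := Finset.filter_subset _ _
  have hGH' : ∀ x y : V, G.Adj x y → (addEdges G F').Adj x y := by
    intro x y h
    rw [addEdges_adj']
    exact Or.inl h
  have hH'H : ∀ x y : V, (addEdges G F').Adj x y → (addEdges G F).Adj x y := by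
    intro x y h
    rw [addEdges_adj'] at h ⊢
    rcases h with h | ⟨hm, hne'⟩
    · exact Or.inl h
    · exact Or.inr ⟨hF'sub hm, hne'⟩
  have hOO : ∀ x y : V, (addEdges G F).Adj x y →
      (¬ ∃ j : Fin p, j ≤ l₂ ∧ b j = x) → (¬ ∃ j : Fin p, j ≤ l₂ ∧ b j = y) →
      (addEdges G F').Adj x y := by
    intro x y h hx hy
    rw [addEdges_adj'] at h ⊢
    rcases h with h | ⟨hm, hne'⟩
    · exact Or.inl h
    · refine Or.inr ⟨Finset.mem_filter.2 ⟨hm, Or.inl ?_⟩, hne'⟩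
      intro z hz
      rcases Sym2.mem_iff.1 hz with rfl | rfl
      · exact hx
      · exact hy
  have hkeep : ∀ (t : Fin p) (w : V), i < t → t ≤ l₂ →
      (¬ ∃ j : Fin p, j ≤ l₂ ∧ b j = w) →
      (∀ t' : Fin p, t ≤ t' → t' ≤ l₂ → (addEdges G F).Adj (b t') w) →
      (addEdges G F').Adj (b t) w := by
    intro t w hit htl hw hall
    have hH := hall t le_rfl htl
    rw [addEdges_adj'] at hH
    rcases hH with h | ⟨hm, hne'⟩
    · exact hGH' _ _ h
    · rw [addEdges_adj']
      exact Or.inr ⟨Finset.mem_filter.2 ⟨hm, Or.inr ⟨t, w, rfl, hit, htl, hw, hall⟩⟩, hne'⟩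
  have hKEY1 : ∀ (a : Fin p) (w : V), a ≤ l₂ → (¬ ∃ j : Fin p, j ≤ l₂ ∧ b j = w) →
      (addEdges G F').Adj (b a) w →
      i < a ∧ ∀ t : Fin p, a ≤ t → t ≤ l₂ → (addEdges G F).Adj (b t) w := by
    intro a w hal hw hadj
    rw [addEdges_adj'] at hadj
    rcases hadj with h | ⟨hm, hne'⟩
    · refine ⟨hF3i a w hal hw h, fun t hat htl => ?_⟩
      rw [addEdges_adj']
      exact Or.inl (hF3ii a t w hw h hat htl)
    · rcases (Finset.mem_filter.1 hm).2 with hO | ⟨s, x, he, his, hsl, hx, hall⟩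
      · exact absurd ⟨a, hal, rfl⟩ (hO (b a) (Sym2.mem_mk_left _ _))
      · rcases Sym2.eq_iff.1 he with ⟨h1, h2⟩ | ⟨h1, h2⟩
        · have hsa : s = a := hB.inj h1.symm
          subst hsa
          rw [h2]
          exact ⟨his, hall⟩
        · exact absurd ⟨s, hsl, h2.symm⟩ hw
  have hKEY1' : ∀ (a : Fin p) (w : V), a ≤ l₂ → (¬ ∃ j : Fin p, j ≤ l₂ ∧ b j = w) →
      (addEdges G F').Adj (b a) w →
      ∀ t : Fin p, a ≤ t → t ≤ l₂ → (addEdges G F').Adj (b t) w := by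
    intro a w hal hw hadj t hat htl
    obtain ⟨hia, hall⟩ := hKEY1 a w hal hw hadj
    exact hkeep t w (lt_of_lt_of_le hia hat) htl hw
      (fun t' h1 h2 => hall t' (le_trans hat h1) h2)
  have hKEY2 : ∀ (a : Fin p) (v w : V), a ≤ l₂ →
      (¬ ∃ j : Fin p, j ≤ l₂ ∧ b j = v) → (¬ ∃ j : Fin p, j ≤ l₂ ∧ b j = w) →
      (addEdges G F').Adj (b a) w → f v < f w →
      (addEdges G F').Adj (b a) v ∧ (addEdges G F').Adj v w := by
    intro a v w hal hv hw hadj hfvw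
    obtain ⟨hia, hall⟩ := hKEY1 a w hal hw hadj
    have hmid : ∀ t : Fin p, a ≤ t → t ≤ l₂ → (addEdges G F).Adj (b t) v := by
      intro t hat htl
      have h1 : f (b t) < f v := hH4b v t hv (le_of_lt (lt_of_lt_of_le hia hat)) htl
      exact (hUmbf.2 (b t) v w h1 hfvw (hall t hat htl)).1
    have hvw : (addEdges G F).Adj v w := by
      have h1 : f (b a) < f v := hH4b v a hv hia.le hal
      exact (hUmbf.2 (b a) v w h1 hfvw (hall a le_rfl hal)).2
    exact ⟨hkeep a v hia hal hv hmid, hOO v w hvw hv hw⟩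
  -- Step 7: the new ordering g
  set g : V → ℕ := fun v =>
    if h : ∃ j : Fin p, j ≤ l₂ ∧ b j = v then (Classical.choose h).val else p + f v
    with hgdef
  have hg_b : ∀ s : Fin p, s ≤ l₂ → g (b s) = s.val := by
    intro s hs
    have h : ∃ j : Fin p, j ≤ l₂ ∧ b j = b s := ⟨s, hs, rfl⟩
    rw [hgdef]
    simp only
    rw [dif_pos h]
    have hspec := Classical.choose_spec h
    have : Classical.choose h = s := hB.inj hspec.2
    rw [this]
  have hg_out : ∀ v : V, (¬ ∃ j : Fin p, j ≤ l₂ ∧ b j = v) → g v = p + f v := by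
    intro v hv
    rw [hgdef]
    simp only
    rw [dif_neg hv]
  have hg_small : ∀ v : V, (∃ j : Fin p, j ≤ l₂ ∧ b j = v) → g v < p := by
    intro v hv
    obtain ⟨j, hj, rfl⟩ := hv
    rw [hg_b j hj]
    exact j.isLt
  have hg_big : ∀ v : V, (¬ ∃ j : Fin p, j ≤ l₂ ∧ b j = v) → p ≤ g v := by
    intro v hv
    rw [hg_out v hv]
    omega
  -- prefix edges of G + F' are G-edges
  have hPP : ∀ (x y : Fin p), x ≤ l₂ → y ≤ l₂ → (addEdges G F').Adj (b x) (b y) →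
      G.Adj (b x) (b y) := by
    intro x y hx hy hadj
    rw [addEdges_adj'] at hadj
    rcases hadj with h | ⟨hm, hne'⟩
    · exact h
    · exfalso
      rcases (Finset.mem_filter.1 hm).2 with hO | ⟨s, x', he, his, hsl, hx', hall⟩
      · exact hO (b x) (Sym2.mem_mk_left _ _) ⟨x, hx, rfl⟩
      · have hx'mem : x' ∈ s(b x, b y) := he ▸ Sym2.mem_mk_right (b s) x'
        rcases Sym2.mem_iff.1 hx'mem with rfl | rfl
        · exact hx' ⟨x, hx, rfl⟩
        · exact hx' ⟨y, hy, rfl⟩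
  -- Step 8: g is an umbrella ordering of G + F'
  have hg_umb : IsUmbrellaOrdering (addEdges G F') g := by
    constructor
    · intro u v huv
      by_cases hu : ∃ j : Fin p, j ≤ l₂ ∧ b j = u
      · by_cases hv : ∃ j : Fin p, j ≤ l₂ ∧ b j = v
        · obtain ⟨ju, hju, rfl⟩ := hu
          obtain ⟨jv, hjv, rfl⟩ := hv
          rw [hg_b ju hju, hg_b jv hjv] at huv
          exact congrArg b (Fin.val_injective huv)
        · have := hg_small u hu
          have := hg_big v hv
          omega
      · by_cases hv : ∃ j : Fin p, j ≤ l₂ ∧ b j = v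
        · have := hg_big u hu
          have := hg_small v hv
          omega
        · rw [hg_out u hu, hg_out v hv] at huv
          exact hUmbf.1 (by omega)
    · intro u v w huv hvw hadj
      by_cases hwP : ∃ j : Fin p, j ≤ l₂ ∧ b j = w
      · have hvP : ∃ j : Fin p, j ≤ l₂ ∧ b j = v := by
          by_contra h
          have := hg_big v h
          have := hg_small w hwP
          omega
        have huP : ∃ j : Fin p, j ≤ l₂ ∧ b j = u := by
          by_contra h
          have := hg_big u h
          have := hg_small w hwP
          omega
        obtain ⟨a, ha, rfl⟩ := huP
        obtain ⟨c, hc, rfl⟩ := hvP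
        obtain ⟨d, hd, rfl⟩ := hwP
        rw [hg_b a ha, hg_b c hc] at huv
        rw [hg_b c hc, hg_b d hd] at hvw
        have hac : a < c := by rw [Fin.lt_def]; exact huv
        have hcd : c < d := by rw [Fin.lt_def]; exact hvw
        obtain ⟨h1, h2⟩ := hB.umbrella a c d hac hcd (hPP a d ha hd hadj)
        exact ⟨hGH' _ _ h1, hGH' _ _ h2⟩
      · by_cases hvP : ∃ j : Fin p, j ≤ l₂ ∧ b j = v
        · have huP : ∃ j : Fin p, j ≤ l₂ ∧ b j = u := by
            by_contra h
            have := hg_big u h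
            have := hg_small v hvP
            omega
          obtain ⟨a, ha, rfl⟩ := huP
          obtain ⟨c, hc, rfl⟩ := hvP
          rw [hg_b a ha, hg_b c hc] at huv
          have hac : a < c := by rw [Fin.lt_def]; exact huv
          have hia := (hKEY1 a w ha hwP hadj).1
          exact ⟨hGH' _ _ (hclique a c hia.le hac hc),
            hKEY1' a w ha hwP hadj c hac.le hc⟩
        · by_cases huP : ∃ j : Fin p, j ≤ l₂ ∧ b j = u
          · obtain ⟨a, ha, rfl⟩ := huP
            have hfvw : f v < f w := by
              rw [hg_out v hvP, hg_out w hwP] at hvw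
              omega
            exact hKEY2 a v w ha hvP hwP hadj hfvw
          · have hfuv : f u < f v := by
              rw [hg_out u huP, hg_out v hvP] at huv
              omega
            have hfvw : f v < f w := by
              rw [hg_out v hvP, hg_out w hwP] at hvw
              omega
            obtain ⟨h1, h2⟩ := hUmbf.2 u v w hfuv hfvw (hH'H u w hadj)
            exact ⟨hOO u v h1 huP hvP, hOO v w h2 hvP hwP⟩
  -- Step 9: conclusion
  refine ⟨F', hF'sub,
    ⟨⟨fun e he => hFdiag e (hF'sub he), fun e he => hFedge e (hF'sub he), ⟨g, hg_umb⟩⟩,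
      (Finset.card_le_card hF'sub).trans hFcard⟩,
    i, hi1, hi2, l₂, hl₂adj, hl₂max, g, hg_umb, ?_, ?_⟩
  · intro s t hs ht
    rw [hg_b s hs, hg_b t ht]
    exact Fin.lt_def
  · intro v hv s hs
    have hv' : ¬ ∃ j : Fin p, j ≤ l₂ ∧ b j = v := by
      rintro ⟨j, hj, he⟩
      exact hv ⟨j, hj, he⟩
    rw [hg_b s hs, hg_out v hv']
    have := s.isLt
    omega
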